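/- Assume the sum-of-exponentials tolerance satisfies ϵ ≤ min{ ω_{1−α}(T)/3, α·ω_{2−α}(1) }. Then A^{(n)}_0 = a^{(n)}_0 and the fast L1 kernels dominate two thirds of the exact L1 kernels: A^{(n)}_{n−k} ≥ (2/3) a^{(n)}_{n−k} for all 1 ≤ k ≤ n − 1 ≤ N − 1. -/

import Mathlib

open Real MeasureTheory

/-- `ω_μ(s) := s^{μ−1}/Γ(μ)`. -/
noncomputable def omega (μ s : ℝ) : ℝ := s ^ (μ - 1) / Real.Gamma μ

/-- The nonuniform L1 kernel `a^{(n)}_{n−k}` (here indexed by the step `k`: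
`L1kernel α t n k = a^{(n)}_{n−k}`). -/
noncomputable def L1kernel (α : ℝ) (t : ℕ → ℝ) (n k : ℕ) : ℝ :=
  (1 / (t k - t (k - 1))) * ∫ s in (t (k - 1))..(t k), omega (1 - α) (t n - s)

/-- The fast L1 kernel `A^{(n)}_{n−k}`, indexed by the step `k`:
`fastKernel α t Nq θ ϖ n k = A^{(n)}_{n−k}`.  In particular
`fastKernel α t Nq θ ϖ n n = A^{(n)}_0 := a^{(n)}_0`, while for `1 ≤ k ≤ n−1`,
`A^{(n)}_{n−k} := (1/τ_k) ∫_{t_{k−1}}^{t_k} Σ_ℓ ϖ^ℓ e^{−θ^ℓ(t_n − s)} ds`. -/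
noncomputable def fastKernel (α : ℝ) (t : ℕ → ℝ) (Nq : ℕ) (θ ϖ : ℕ → ℝ)
    (n k : ℕ) : ℝ :=
  if k = n then L1kernel α t n n
  else (1 / (t k - t (k - 1))) *
    ∫ s in (t (k - 1))..(t k), ∑ ℓ ∈ Finset.Icc 1 Nq, ϖ ℓ * Real.exp (-(θ ℓ) * (t n - s))

theorem fast_L1_kernels_two_thirds
    (α T : ℝ) (hα0 : 0 < α) (hα1 : α < 1)
    (N : ℕ) (hN : 1 ≤ N)
    (t : ℕ → ℝ) (ht0 : t 0 = 0) (htN : t N = T)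
    (hmesh : ∀ k, k < N → t k < t (k + 1))
    (ϵ : ℝ) (hϵ0 : 0 < ϵ)
    (Nq : ℕ) (hNq : 1 ≤ Nq) (θ ϖ : ℕ → ℝ)
    (hθ : ∀ ℓ, 1 ≤ ℓ → ℓ ≤ Nq → 0 < θ ℓ)
    (hϖ : ∀ ℓ, 1 ≤ ℓ → ℓ ≤ Nq → 0 < ϖ ℓ)
    -- the SOE approximation is accurate within `ϵ` on `[min_{1≤k≤N} τ_k, T]`
    (hsoe : ∀ s : ℝ, (∃ k, 1 ≤ k ∧ k ≤ N ∧ t k - t (k - 1) ≤ s) → s ≤ T →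
      |omega (1 - α) s - ∑ ℓ ∈ Finset.Icc 1 Nq, ϖ ℓ * Real.exp (-(θ ℓ) * s)| ≤ ϵ)
    -- the tolerance satisfies `ϵ ≤ min{ ω_{1−α}(T)/3, α ω_{2−α}(1) }`
    (hϵsmall : ϵ ≤ min (omega (1 - α) T / 3) (α * omega (2 - α) 1)) :
    -- `A^{(n)}_0 = a^{(n)}_0` and `A^{(n)}_{n−k} ≥ (2/3) a^{(n)}_{n−k}`
    -- for `1 ≤ k ≤ n − 1 ≤ N − 1`.
    (∀ n, 1 ≤ n → n ≤ N → fastKernel α t Nq θ ϖ n n = L1kernel α t n n) ∧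
    (∀ n k, 1 ≤ k → k + 1 ≤ n → n ≤ N →
      (2 / 3 : ℝ) * L1kernel α t n k ≤ fastKernel α t Nq θ ϖ n k) := by
  have hΓ : 0 < Real.Gamma (1 - α) := Real.Gamma_pos_of_pos (by linarith)
  have hmono : ∀ j, j ≤ N → ∀ i, i ≤ j → t i ≤ t j := by
    intro j
    induction j with
    | zero => intro _ i hi; simp [Nat.le_zero.mp hi]
    | succ j ih =>
      intro hjN i hi
      rcases Nat.lt_succ_iff_lt_or_eq.mp (Nat.lt_succ_of_le hi) with h | h
      · exact le_trans (ih (by omega) i (by omega)) (hmesh j (by omega)).le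
      · simp [h]
  constructor
  · intro n _ _
    simp [fastKernel]
  · intro n k hk1 hkn hnN
    have hkn' : k ≠ n := by omega
    have hab : t (k - 1) < t k := by
      have := hmesh (k - 1) (by omega)
      have hk : k - 1 + 1 = k := by omega
      rwa [hk] at this
    set a := t (k - 1) with ha
    set b := t k with hb
    have hτ : 0 < b - a := by linarith
    have ha0 : 0 ≤ a := by
      rw [ha, ← ht0]; exact hmono (k - 1) (by omega) 0 (by omega)
    have hbn : b < t n := by
      calc b < t (k + 1) := hmesh k (by omega)
        _ ≤ t n := hmono n hnN (k + 1) hkn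
    have htnT : t n ≤ T := by rw [← htN]; exact hmono N le_rfl n hnN
    -- pointwise facts on [a,b]
    have hpos : ∀ s ∈ Set.Icc a b, 0 < t n - s := fun s hs => by
      have := hs.2; linarith
    have hleT : ∀ s ∈ Set.Icc a b, t n - s ≤ T := fun s hs => by
      have := hs.1; linarith
    -- continuity / integrability
    have hfc : ContinuousOn (fun s => omega (1 - α) (t n - s)) (Set.Icc a b) := by
      unfold omega
      apply ContinuousOn.div_const
      apply ContinuousOn.rpow_const
      · exact (continuousOn_const.sub continuousOn_id)
      · intro s hs
        exact Or.inl (ne_of_gt (hpos s hs))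
    have hfi : IntervalIntegrable (fun s => omega (1 - α) (t n - s)) volume a b := by
      apply ContinuousOn.intervalIntegrable
      rwa [Set.uIcc_of_le hab.le]
    have hgc : Continuous (fun s : ℝ => ∑ ℓ ∈ Finset.Icc 1 Nq, ϖ ℓ * Real.exp (-(θ ℓ) * (t n - s))) := by
      apply continuous_finset_sum
      intro ℓ _
      exact continuous_const.mul ((Real.continuous_exp.comp (continuous_const.mul (continuous_const.sub continuous_id))))
    have hgi : IntervalIntegrable (fun s : ℝ => ∑ ℓ ∈ Finset.Icc 1 Nq, ϖ ℓ * Real.exp (-(θ ℓ) * (t n - s))) volume a b :=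
      hgc.intervalIntegrable a b
    -- ω(T) lower bound pointwise
    have hωT : 0 < omega (1 - α) T := by
      have hT : 0 < T := by
        rw [← htN, ← ht0]; exact lt_of_le_of_lt (le_of_eq rfl) (by
          calc t 0 ≤ t (k - 1) := hmono (k - 1) (by omega) 0 (by omega)
            _ < t k := hab
            _ < t n := hbn
            _ ≤ t N := hmono N le_rfl n hnN)
      exact div_pos (Real.rpow_pos_of_pos hT _) hΓ
    have hflow : ∀ s ∈ Set.Icc a b, omega (1 - α) T ≤ omega (1 - α) (t n - s) := by
      intro s hs
      unfold omega
      exact (div_le_div_iff_of_pos_right hΓ).mpr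
        (Real.rpow_le_rpow_of_nonpos (hpos s hs) (hleT s hs) (by linarith))
    -- SOE lower bound pointwise
    have hglow : ∀ s ∈ Set.Icc a b, omega (1 - α) (t n - s) - ϵ ≤
        ∑ ℓ ∈ Finset.Icc 1 Nq, ϖ ℓ * Real.exp (-(θ ℓ) * (t n - s)) := by
      intro s hs
      have hwit : ∃ j, 1 ≤ j ∧ j ≤ N ∧ t j - t (j - 1) ≤ t n - s := by
        refine ⟨k + 1, by omega, by omega, ?_⟩
        have h1 : t (k + 1) ≤ t n := hmono n hnN (k + 1) hkn
        have h2 : s ≤ b := hs.2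
        simp only [Nat.add_sub_cancel]
        linarith
      have := hsoe (t n - s) hwit (hleT s hs)
      have := abs_sub_le_iff.mp this
      linarith [this.1]
    -- integral estimates
    set I := ∫ s in a..b, omega (1 - α) (t n - s) with hI
    set J := ∫ s in a..b, ∑ ℓ ∈ Finset.Icc 1 Nq, ϖ ℓ * Real.exp (-(θ ℓ) * (t n - s)) with hJ
    have hIlow : omega (1 - α) T * (b - a) ≤ I := by
      have h := intervalIntegral.integral_mono_on hab.le
        (intervalIntegrable_const (c := omega (1 - α) T)) hfi hflow
      rw [intervalIntegral.integral_const, smul_eq_mul] at h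
      rw [← hI] at h
      linarith
    have hJlow : I - ϵ * (b - a) ≤ J := by
      have h1 := intervalIntegral.integral_mono_on hab.le (hfi.sub (intervalIntegrable_const (c := ϵ))) hgi hglow
      have h2 : (∫ s in a..b, (omega (1 - α) (t n - s) - ϵ)) = I - ϵ * (b - a) := by
        rw [intervalIntegral.integral_sub hfi (intervalIntegrable_const (c := ϵ)),
          intervalIntegral.integral_const, smul_eq_mul, ← hI]
        ring
      rw [h2] at h1
      exact h1
    have hϵω : 3 * ϵ ≤ omega (1 - α) T := by
      have := le_trans hϵsmall (min_le_left _ _)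
      linarith
    have hJI : (2 / 3 : ℝ) * I ≤ J := by
      have h3 : 3 * (ϵ * (b - a)) ≤ I :=
        le_trans (by nlinarith) hIlow
      linarith
    -- conclude
    rw [L1kernel, fastKernel, if_neg hkn', ← ha, ← hb, ← hI, ← hJ]
    have h1d : 0 < 1 / (b - a) := by positivity
    calc (2 / 3 : ℝ) * (1 / (b - a) * I) = 1 / (b - a) * ((2 / 3) * I) := by ring
      _ ≤ 1 / (b - a) * J := by
          exact mul_le_mul_of_nonneg_left hJI h1d.le
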